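/- The improper integral ∫_{1}^{∞} dy / (y²·√(y⁴ − 1)) converges and equals √2·π^{3/2} / Γ(1/4)². -/

import Mathlib

open MeasureTheory Real Set


lemma beta_congr_aux : ∀ x ∈ Set.uIcc (0:ℝ) 1,
    (x:ℂ) ^ ((3/4:ℂ)-1) * (1-(x:ℂ)) ^ ((1/2:ℂ)-1) =
      ((x ^ (-(1:ℝ)/4) * (1-x) ^ (-(1:ℝ)/2) : ℝ) : ℂ) := by
  intro x hx
  rw [Set.uIcc_of_le zero_le_one] at hx
  have h1 : (0:ℝ) ≤ x := hx.1
  have h2 : (0:ℝ) ≤ 1 - x := by linarith [hx.2]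
  push_cast
  rw [Complex.ofReal_cpow h1, Complex.ofReal_cpow h2]
  norm_num

lemma beta_integrable :
    IntegrableOn (fun t : ℝ => t ^ (-(1:ℝ)/4) * (1-t) ^ (-(1:ℝ)/2)) (Ioo 0 1) := by
  have hc := Complex.betaIntegral_convergent (u := 3/4) (v := 1/2) (by norm_num) (by norm_num)
  rw [intervalIntegrable_iff_integrableOn_Ioc_of_le zero_le_one] at hc
  have hre : IntegrableOn
      (fun x : ℝ => ((x:ℂ) ^ ((3/4:ℂ)-1) * (1-(x:ℂ)) ^ ((1/2:ℂ)-1)).re) (Ioc 0 1) := hc.re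
  refine ((hre.mono_set Ioo_subset_Ioc_self).congr_fun ?_ measurableSet_Ioo)
  intro x hx
  have := beta_congr_aux x (by rw [Set.uIcc_of_le zero_le_one]; exact ⟨hx.1.le, hx.2.le⟩)
  simp only [this, Complex.ofReal_re]

lemma beta_value :
    Real.Gamma (3/4) * Real.Gamma (1/2) =
      Real.Gamma (5/4) * ∫ t in Ioo (0:ℝ) 1, t ^ (-(1:ℝ)/4) * (1-t) ^ (-(1:ℝ)/2) := by
  have hB : Complex.betaIntegral (3/4) (1/2) =
      ((∫ t in Ioo (0:ℝ) 1, t ^ (-(1:ℝ)/4) * (1-t) ^ (-(1:ℝ)/2) : ℝ) : ℂ) := by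
    rw [Complex.betaIntegral]
    rw [intervalIntegral.integral_congr beta_congr_aux]
    rw [intervalIntegral.integral_ofReal]
    norm_num [intervalIntegral.integral_of_le zero_le_one,
      MeasureTheory.integral_Ioc_eq_integral_Ioo]
  have h := Complex.Gamma_mul_Gamma_eq_betaIntegral
    (s := 3/4) (t := 1/2) (by norm_num) (by norm_num)
  rw [hB] at h
  have h34 : (3/4 : ℂ) = ((3/4 : ℝ) : ℂ) := by norm_num
  have h12 : (1/2 : ℂ) = ((1/2 : ℝ) : ℂ) := by norm_num
  have h54 : (3/4 + 1/2 : ℂ) = ((5/4 : ℝ) : ℂ) := by norm_num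
  rw [h34, h12] at h
  have h54' : ((3/4:ℝ):ℂ) + ((1/2:ℝ):ℂ) = ((5/4 : ℝ) : ℂ) := by norm_num
  rw [h54'] at h
  rw [Complex.Gamma_ofReal, Complex.Gamma_ofReal, Complex.Gamma_ofReal] at h
  exact_mod_cast h

lemma phi_deriv : ∀ t ∈ Ioo (0:ℝ) 1,
    HasDerivWithinAt (fun t : ℝ => t ^ (-(1:ℝ)/4))
      ((-(1:ℝ)/4) * t ^ ((-(1:ℝ)/4) - 1)) (Ioo 0 1) t :=
  fun t ht => (Real.hasDerivAt_rpow_const (Or.inl ht.1.ne')).hasDerivWithinAt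

lemma phi_inj : InjOn (fun t : ℝ => t ^ (-(1:ℝ)/4)) (Ioo 0 1) := by
  apply StrictAntiOn.injOn
  intro x hx y hy hxy
  simp only
  rw [← inv_lt_inv₀ (Real.rpow_pos_of_pos hx.1 _) (Real.rpow_pos_of_pos hy.1 _),
    ← Real.rpow_neg hx.1.le, ← Real.rpow_neg hy.1.le]
  exact Real.rpow_lt_rpow hx.1.le hxy (by norm_num)

lemma phi_image : (fun t : ℝ => t ^ (-(1:ℝ)/4)) '' (Ioo 0 1) = Ioi 1 := by
  ext y
  constructor
  · rintro ⟨t, ht, rfl⟩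
    exact (Real.one_lt_rpow_iff_of_pos ht.1).mpr (Or.inr ⟨ht.2, by norm_num⟩)
  · intro hy
    have hy0 : (0:ℝ) < y := lt_trans one_pos hy
    refine ⟨y ^ (-4 : ℝ), ⟨Real.rpow_pos_of_pos hy0 _,
      Real.rpow_lt_one_of_one_lt_of_neg hy (by norm_num)⟩, ?_⟩
    simp only
    rw [← Real.rpow_mul hy0.le]
    norm_num

lemma pointwise_eq : ∀ t ∈ Ioo (0:ℝ) 1,
    |(-(1:ℝ)/4) * t ^ ((-(1:ℝ)/4) - 1)| •
      (1 / ((t ^ (-(1:ℝ)/4)) ^ 2 * Real.sqrt ((t ^ (-(1:ℝ)/4)) ^ 4 - 1))) =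
      (1/4) * (t ^ (-(1:ℝ)/4) * (1-t) ^ (-(1:ℝ)/2)) := by
  intro t ht
  have ht0 : (0:ℝ) < t := ht.1
  have ht1 : (0:ℝ) < 1 - t := by linarith [ht.2]
  have h4 : (t ^ (-(1:ℝ)/4)) ^ 4 = t⁻¹ := by
    rw [← Real.rpow_natCast (t ^ (-(1:ℝ)/4)) 4, ← Real.rpow_mul ht0.le]
    norm_num [Real.rpow_neg_one]
  have h2 : (t ^ (-(1:ℝ)/4)) ^ 2 = (Real.sqrt t)⁻¹ := by
    rw [← Real.rpow_natCast (t ^ (-(1:ℝ)/4)) 2, ← Real.rpow_mul ht0.le,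
      Real.sqrt_eq_rpow, ← Real.rpow_neg ht0.le]
    norm_num
  have h41 : (t ^ (-(1:ℝ)/4)) ^ 4 - 1 = (1 - t)/t := by rw [h4]; field_simp
  have hsq : Real.sqrt ((1 - t)/t) = Real.sqrt (1-t) / Real.sqrt t :=
    Real.sqrt_div ht1.le t
  have habs : |(-(1:ℝ)/4) * t ^ ((-(1:ℝ)/4) - 1)| = (1/4) * (t ^ (-(1:ℝ)/4) / t) := by
    rw [abs_mul, abs_of_nonneg (Real.rpow_nonneg ht0.le _), Real.rpow_sub ht0,
      Real.rpow_one]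
    norm_num
  have hhalf : (1-t) ^ (-(1:ℝ)/2) = (Real.sqrt (1-t))⁻¹ := by
    rw [Real.sqrt_eq_rpow, ← Real.rpow_neg ht1.le]
    norm_num
  rw [smul_eq_mul, habs, h41, hsq, h2, hhalf]
  have hst : Real.sqrt t ≠ 0 := (Real.sqrt_pos.mpr ht0).ne'
  have hst1 : Real.sqrt (1-t) ≠ 0 := (Real.sqrt_pos.mpr ht1).ne'
  have hsq2 : Real.sqrt t * Real.sqrt t = t := Real.mul_self_sqrt ht0.le
  field_simp
  ring_nf
  exact Real.sq_sqrt ht0.le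

/-- The improper integral `∫_{1}^{∞} dy / (y²·√(y⁴ − 1))` converges and equals
`√2·π^{3/2} / Γ(1/4)²`. -/
theorem adS5_wilson_loop_length_integral :
    IntegrableOn (fun y : ℝ => 1 / (y ^ 2 * Real.sqrt (y ^ 4 - 1))) (Ioi 1) ∧
    ∫ y in Ioi (1 : ℝ), 1 / (y ^ 2 * Real.sqrt (y ^ 4 - 1)) =
      Real.sqrt 2 * Real.pi ^ ((3 : ℝ) / 2) / (Real.Gamma (1 / 4)) ^ 2 := by
  set f : ℝ → ℝ := fun y => 1 / (y ^ 2 * Real.sqrt (y ^ 4 - 1)) with hf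
  set g : ℝ → ℝ := fun t => t ^ (-(1:ℝ)/4) * (1-t) ^ (-(1:ℝ)/2) with hg
  have hiff := integrableOn_image_iff_integrableOn_abs_deriv_smul
    measurableSet_Ioo phi_deriv phi_inj f
  have hval := integral_image_eq_integral_abs_deriv_smul
    measurableSet_Ioo phi_deriv phi_inj f
  rw [phi_image] at hiff hval
  have hcongr : ∀ t ∈ Ioo (0:ℝ) 1,
      |(-(1:ℝ)/4) * t ^ ((-(1:ℝ)/4) - 1)| • f (t ^ (-(1:ℝ)/4)) = (1/4) * g t :=
    fun t ht => pointwise_eq t ht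
  have hint : IntegrableOn f (Ioi 1) := by
    rw [hiff]
    have hbi : IntegrableOn (fun t : ℝ => (1/4) * g t) (Ioo 0 1) :=
      beta_integrable.const_mul (1/4)
    exact hbi.congr_fun (fun t ht => (hcongr t ht).symm) measurableSet_Ioo
  refine ⟨hint, ?_⟩
  rw [hval, setIntegral_congr_fun measurableSet_Ioo hcongr,
    integral_const_mul]
  -- now: (1/4) * ∫ g = √2 π^(3/2) / Γ(1/4)²
  have hB := beta_value
  have hG12 : Real.Gamma (1/2) = Real.sqrt π := Real.Gamma_one_half_eq
  have hG54 : Real.Gamma (5/4) = (1/4) * Real.Gamma (1/4) := by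
    rw [show (5:ℝ)/4 = 1/4 + 1 by norm_num, Real.Gamma_add_one (by norm_num : (1:ℝ)/4 ≠ 0)]
  have hrefl : Real.Gamma (1/4) * Real.Gamma (3/4) = π * Real.sqrt 2 := by
    have h := Real.Gamma_mul_Gamma_one_sub (1/4)
    rw [show (1:ℝ) - 1/4 = 3/4 by norm_num, show π * (1/4) = π/4 by ring,
      Real.sin_pi_div_four] at h
    rw [h]
    have h2 : Real.sqrt 2 * Real.sqrt 2 = 2 := Real.mul_self_sqrt (by norm_num)
    have hs2 : Real.sqrt 2 ≠ 0 := by positivity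
    field_simp
    linear_combination -1 * (Real.sq_sqrt (by norm_num : (0:ℝ) ≤ 2))
  have hG14 : 0 < Real.Gamma (1/4) := Real.Gamma_pos_of_pos (by norm_num)
  have hpi32 : Real.pi ^ ((3:ℝ)/2) = π * Real.sqrt π := by
    rw [show (3:ℝ)/2 = 1 + 1/2 by norm_num, Real.rpow_add Real.pi_pos,
      Real.rpow_one, Real.sqrt_eq_rpow]
  rw [hG12, hG54] at hB
  -- hB : Γ(3/4) * √π = (1/4)Γ(1/4) * ∫ g
  have hBval : ∫ t in Ioo (0:ℝ) 1, g t = 4 * Real.Gamma (3/4) * Real.sqrt π / Real.Gamma (1/4) := by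
    simp only [hg]
    field_simp at hB ⊢
    linear_combination -hB
  rw [hBval, hpi32]
  have hG34 : Real.Gamma (3/4) = π * Real.sqrt 2 / Real.Gamma (1/4) := by
    rw [eq_div_iff hG14.ne']
    linear_combination hrefl
  rw [hG34]
  field_simp
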